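/- arXiv:0804.2206 — 3 statements merged into one kernel-verified Lean document; each statement's English description precedes it below -/
import Mathlib

section
/- Let {v_{2n}} be the polynomials associated with an admissible interpolation scheme A, with zeros in a fixed compact set K_0 ⊂ ℂ disjoint from the compact interval I ⊂ ℝ. Then for every ε > 0 there exist an integer l and, for all n large enough, a polynomial T_{l,n} with complex coefficients of degree at most l such that |v_{2n}(x)/|v_{2n}(x)| − T_{l,n}(x)| < ε for all x ∈ I. -/
open MeasureTheory Metric Complex Polynomial Filter Topology Asymptotics
open scoped Classical ENNReal

noncomputable section

/-- The support of a Borel measure on `ℝ`: points all of whose neighborhoods have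
positive measure. -/
def msupport (μ : Measure ℝ) : Set ℝ := {x : ℝ | ∀ ε > 0, 0 < μ (Metric.ball x ε)}

/-- A subset of `ℝ` viewed as a subset of `ℂ`. -/
def cemb (S : Set ℝ) : Set ℂ := (fun x : ℝ => (x : ℂ)) '' S

/-- Weak-star convergence of a sequence of measures on `ℂ`, tested against continuous
compactly supported functions. -/
def WeakStarTendsTo (ν : ℕ → Measure ℂ) (μ : Measure ℂ) : Prop :=
  ∀ f : ℂ → ℝ, Continuous f → HasCompactSupport f →
    Tendsto (fun n => ∫ z, f z ∂(ν n)) atTop (𝓝 (∫ z, f z ∂μ))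

/-- The logarithmic kernel `log (1/|z-w|)`. -/
def logKernel (z w : ℂ) : ℝ := Real.log (1 / ‖z - w‖)

/-- The logarithmic potential of a measure on `ℂ`. -/
def logPotential (μ : Measure ℂ) (z : ℂ) : ℝ := ∫ w, logKernel z w ∂μ

/-- A compactly supported measure has finite logarithmic energy iff the kernel is
integrable for the product measure. -/
def HasFiniteLogEnergy (μ : Measure ℂ) : Prop :=
  Integrable (fun p : ℂ × ℂ => logKernel p.1 p.2) (μ.prod μ)

/-- The logarithmic energy `I[μ] = ∬ log (1/|z-w|) dμ dμ`. -/
def logEnergy (μ : Measure ℂ) : ℝ := ∫ p : ℂ × ℂ, logKernel p.1 p.2 ∂(μ.prod μ)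

/-- A probability measure carried by the set `E`. -/
def IsProbOn (μ : Measure ℂ) (E : Set ℂ) : Prop :=
  IsProbabilityMeasure μ ∧ μ Eᶜ = 0

/-- `μ` is the (logarithmic) equilibrium measure of `E`: a probability measure on `E` of
finite energy minimizing the logarithmic energy. -/
def IsEquilibriumMeasure (E : Set ℂ) (μ : Measure ℂ) : Prop :=
  IsProbOn μ E ∧ HasFiniteLogEnergy μ ∧
    ∀ ν : Measure ℂ, IsProbOn ν E → HasFiniteLogEnergy ν → logEnergy μ ≤ logEnergy ν

/-- Logarithmic capacity of a compact set: `exp(-inf I[μ])`, the infimum over probability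
measures on the set (`0` if the set is polar). -/
def capCompact (K : Set ℂ) : ℝ :=
  sSup ((fun μ : Measure ℂ => Real.exp (-logEnergy μ)) ''
    {μ : Measure ℂ | IsProbOn μ K ∧ HasFiniteLogEnergy μ})

/-- Logarithmic capacity of an arbitrary set: supremum of the capacities of its
compact subsets. -/
def cap (E : Set ℂ) : ℝ :=
  sSup (capCompact '' {K : Set ℂ | IsCompact K ∧ K ⊆ E})

/-- Harmonicity on an open set via the mean value property. -/
def HarmonicOnMV (h : ℂ → ℝ) (U : Set ℂ) : Prop :=
  ContinuousOn h U ∧ ∀ z r, 0 < r → Metric.closedBall z r ⊆ U →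
    h z = (2 * Real.pi)⁻¹ *
      ∫ θ in (0:ℝ)..(2 * Real.pi), h (z + (r : ℂ) * Complex.exp ((θ : ℂ) * Complex.I))

/-- The complex measure `dλ = e^{iφ} dμ` belongs to the class `M`. -/
structure ClassM (μ : Measure ℝ) (φ : ℝ → ℝ) : Prop where
  finite : IsFiniteMeasure μ
  compact_supp : IsCompact (msupport μ)
  infinite_supp : (msupport μ).Infinite
  meas : Measurable φ
  bv : BoundedVariationOn φ (msupport μ)
  regular : ∃ ν : Measure ℂ, IsEquilibriumMeasure (cemb (msupport μ)) ν ∧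
      Continuous (logPotential ν)
  density : ∃ c > (0:ℝ), ∃ L > (0:ℝ), ∀ x ∈ msupport μ, ∀ δ : ℝ, δ ∈ Set.Ioo (0:ℝ) 1 →
      ENNReal.ofReal (c * δ ^ L) ≤ μ (Set.Icc (x - δ) (x + δ))

/-- The monic polynomial `z ↦ ∏ (z - ζ j)`, as a function. -/
def vfun {k : ℕ} (ζ : Fin k → ℂ) (z : ℂ) : ℂ := ∏ j, (z - ζ j)

/-- Normalized counting measure of a finite family of points. -/
def countMeas {k : ℕ} (ζ : Fin k → ℂ) : Measure ℂ :=
  ((k : ℝ≥0∞))⁻¹ • ∑ j, Measure.dirac (ζ j)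

/-- Counting measure of the roots of a polynomial (with multiplicity), normalized by `1/n`. -/
def rootMeasure (n : ℕ) (q : Polynomial ℂ) : Measure ℂ :=
  ((n : ℝ≥0∞))⁻¹ • (q.roots.map Measure.dirac).sum

/-- Denominator of the reduced form of the rational function `p/q`. -/
def redDenom (p q : Polynomial ℂ) : Polynomial ℂ := q / EuclideanDomain.gcd p q

/-- Numerator of the reduced form of the rational function `p/q`. -/
def redNum (p q : Polynomial ℂ) : Polynomial ℂ := p / EuclideanDomain.gcd p q

/-- Value at `z` of the rational function `p/q`. -/
def ratEval (p q : Polynomial ℂ) (z : ℂ) : ℂ := (redNum p q).eval z / (redDenom p q).eval z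

/-- Counting measure of the poles (with multiplicity) of the rational function `p/q`,
normalized by `1/n`. -/
def poleMeasure (n : ℕ) (p q : Polynomial ℂ) : Measure ℂ := rootMeasure n (redDenom p q)

/-- The Cauchy transform of `e^{iφ} dμ` plus the rational function `P/Q`. -/
def Fmeas (μ : Measure ℝ) (φ : ℝ → ℝ) (P Q : Polynomial ℂ) (z : ℂ) : ℂ :=
  (∫ t, Complex.exp (Complex.I * (φ t : ℂ)) / (z - (t : ℂ)) ∂μ) + P.eval z / Q.eval z

/-- The Cauchy transform of `ρ dμ` plus the rational function `P/Q`. -/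
def Fdens (μ : Measure ℝ) (ρ : ℝ → ℂ) (P Q : Polynomial ℂ) (z : ℂ) : ℂ :=
  (∫ t, ρ t / (z - (t : ℂ)) ∂μ) + P.eval z / Q.eval z

/-- `(p, q)` is a multipoint Padé pair of order `n` for `F` (holomorphic on `Ω`) with
interpolation polynomial `v`:  `deg p ≤ n`, `deg q ≤ n`, `q ≠ 0`, `(qF - p)/v` extends
holomorphically to `Ω`, and the extension is `O(1/z^{n+1})` at infinity. -/
def IsPadePair (F : ℂ → ℂ) (Ω : Set ℂ) (n : ℕ) (v : ℂ → ℂ) (p q : Polynomial ℂ) : Prop :=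
  p.natDegree ≤ n ∧ q.natDegree ≤ n ∧ q ≠ 0 ∧
  ∃ g : ℂ → ℂ, DifferentiableOn ℂ g Ω ∧
    (∀ z ∈ Ω, v z ≠ 0 → g z = (q.eval z * F z - p.eval z) / v z) ∧
    g =O[Bornology.cobounded ℂ] fun z => (z ^ (n + 1))⁻¹

/-- Principal branch of the argument, with the convention `A(0) = π`. -/
def argA (z : ℂ) : ℝ := if z = 0 then Real.pi else Complex.arg z

/-- The angle in which the interval `[a,b]` is seen at `ξ`. -/
def ang (ξ : ℂ) (a b : ℝ) : ℝ := |argA ((a : ℂ) - ξ) - argA ((b : ℂ) - ξ)|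

/-- The angle function of a system of intervals. -/
def theta {m : ℕ} (a b : Fin m → ℝ) (ξ : ℂ) : ℝ := ∑ j, ang ξ (a j) (b j)

/-- An admissible interpolation scheme: points `ζ n` lie in a compact set `K₀` disjoint
from `Ih`, normalized counting measures converge weak-star to a probability measure `σ`
of finite logarithmic energy, and the derivatives of `v_{2n}/|v_{2n}|` are uniformly
bounded on `Ih`. -/
structure Admissible (K₀ : Set ℂ) (Ih : Set ℝ) (ζ : ∀ n : ℕ, Fin (2 * n) → ℂ)
    (σ : Measure ℂ) : Prop where
  compact : IsCompact K₀
  disjI : ∀ x ∈ Ih, (x : ℂ) ∉ K₀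
  mem : ∀ n j, ζ n j ∈ K₀
  prob : IsProbabilityMeasure σ
  energy : HasFiniteLogEnergy σ
  wstar : WeakStarTendsTo (fun n => countMeas (ζ n)) σ
  deriv_bound : ∃ C : ℝ, ∀ n, ∀ x ∈ Ih,
    ‖deriv (fun y : ℝ => vfun (ζ n) (y : ℂ) / (‖vfun (ζ n) (y : ℂ)‖ : ℂ)) x‖ ≤ C

/-- A uniform bound `V_A` on the variation of continuous branches of the argument of
`v_{2n}` on `Ih`. -/
def VarBound (Ih : Set ℝ) (ζ : ∀ n : ℕ, Fin (2 * n) → ℂ) (VA : ℝ) : Prop :=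
  ∀ n, ∃ ψ : ℝ → ℝ, ContinuousOn ψ Ih ∧
    (∀ x ∈ Ih, vfun (ζ n) (x : ℂ)
      = (‖vfun (ζ n) (x : ℂ)‖ : ℂ) * Complex.exp (Complex.I * (ψ x : ℂ))) ∧
    (eVariationOn ψ Ih).toReal ≤ VA

/-- The orthogonality relation `∫ t^k Q_s(t) q_n(t) / v_{2n}(t) dλ(t) = 0` for
`dλ = e^{iφ} dμ`. -/
def OrthRel (μ : Measure ℝ) (φ : ℝ → ℝ) (Q : Polynomial ℂ) {k2 : ℕ} (ζ : Fin k2 → ℂ)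
    (qn : Polynomial ℂ) (k : ℕ) : Prop :=
  ∫ t, (t : ℂ) ^ k * Q.eval (t : ℂ) * qn.eval (t : ℂ) / vfun ζ (t : ℂ)
      * Complex.exp (Complex.I * (φ t : ℂ)) ∂μ = 0

/-- The upper characteristic `m̄(z)` of a sequence of (multi)sets of poles. -/
def upperChar (poles : ℕ → Multiset ℂ) (z : ℂ) : ℕ∞ :=
  ⨅ (U : Set ℂ) (_ : IsOpen U) (_ : z ∈ U),
    Filter.limsup (fun n => ((Multiset.filter (fun w => w ∈ U) (poles n)).card : ℕ∞))
      Filter.atTop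

/-- Subharmonicity on an open set for `[-∞,∞)`-valued functions: upper semicontinuous,
not identically `-∞` on any connected component, and satisfying the sub-mean value
inequality (tested against integrable majorants of the values on circles). -/
def SubharmonicOn (u : ℂ → EReal) (D : Set ℂ) : Prop :=
  UpperSemicontinuousOn u D ∧
  (∀ z ∈ D, u z ≠ ⊤) ∧
  (∀ z ∈ D, ∃ w ∈ connectedComponentIn D z, u w ≠ ⊥) ∧
  ∀ z r, 0 < r → Metric.closedBall z r ⊆ D →
    ∀ g : ℝ → ℝ, IntervalIntegrable g MeasureTheory.volume 0 (2 * Real.pi) →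
      (∀ θ ∈ Set.Icc (0:ℝ) (2 * Real.pi),
        u (z + (r : ℂ) * Complex.exp ((θ : ℂ) * Complex.I)) ≤ (g θ : EReal)) →
      u z ≤ (((2 * Real.pi)⁻¹ * ∫ θ in (0:ℝ)..(2 * Real.pi), g θ : ℝ) : EReal)

end

open scoped unitInterval in
/-- Quantitative Bernstein approximation for Lipschitz ℂ-valued functions on `[0,1]`. -/
lemma bern_err (m : ℕ) (hm : 0 < m) (f : ℝ → ℂ) (L : ℝ) (hL : 0 ≤ L)
    (hf : ∀ s ∈ Set.Icc (0:ℝ) 1, ∀ t ∈ Set.Icc (0:ℝ) 1, ‖f s - f t‖ ≤ L * |s - t|)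
    (x : I) :
    ‖(∑ k : Fin (m + 1), ((bernstein m k x : ℝ) : ℂ) * f ((k : ℝ) / m)) - f (x : ℝ)‖
      ≤ L / (2 * Real.sqrt m) := by
  have hmR : 0 < (m : ℝ) := by exact_mod_cast hm
  have hsq : (0:ℝ) < Real.sqrt m := Real.sqrt_pos.2 hmR
  have hxmem : (x : ℝ) ∈ Set.Icc (0:ℝ) 1 := x.2
  have hkmem : ∀ k : Fin (m + 1), ((k : ℝ) / m) ∈ Set.Icc (0:ℝ) 1 := by
    intro k
    constructor
    · positivity
    · rw [div_le_one hmR]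
      exact_mod_cast Nat.lt_succ_iff.mp k.2
  have hprob : (∑ k : Fin (m + 1), ((bernstein m k x : ℝ) : ℂ)) = 1 := by
    rw [← Complex.ofReal_sum, bernstein.probability m x, Complex.ofReal_one]
  have hdiff : (∑ k : Fin (m + 1), ((bernstein m k x : ℝ) : ℂ) * f ((k : ℝ) / m)) - f (x : ℝ)
      = ∑ k : Fin (m + 1), ((bernstein m k x : ℝ) : ℂ) * (f ((k : ℝ) / m) - f (x : ℝ)) := by
    simp_rw [mul_sub, Finset.sum_sub_distrib, ← Finset.sum_mul, hprob, one_mul]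
  set d : Fin (m + 1) → ℝ := fun k => |(k : ℝ) / m - (x : ℝ)| with hd
  have step1 : ‖(∑ k : Fin (m + 1), ((bernstein m k x : ℝ) : ℂ) * f ((k : ℝ) / m)) - f (x : ℝ)‖
      ≤ L * ∑ k : Fin (m + 1), bernstein m k x * d k := by
    rw [hdiff]
    refine (norm_sum_le _ _).trans ?_
    rw [Finset.mul_sum]
    refine Finset.sum_le_sum fun k _ => ?_
    rw [norm_mul, Complex.norm_real, Real.norm_eq_abs, _root_.abs_of_nonneg bernstein_nonneg]
    calc bernstein m k x * ‖f ((k : ℝ) / m) - f (x : ℝ)‖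
        ≤ bernstein m k x * (L * d k) := by
          exact mul_le_mul_of_nonneg_left (hf _ (hkmem k) _ hxmem) bernstein_nonneg
      _ = L * (bernstein m k x * d k) := by ring
  -- Cauchy–Schwarz estimate for the first absolute moment
  have hA : (∑ k : Fin (m + 1), bernstein m k x * d k) ^ 2
      ≤ (∑ k : Fin (m + 1), bernstein m k x)
        * ∑ k : Fin (m + 1), ((x : ℝ) - (k : ℝ) / m) ^ 2 * bernstein m k x := by
    have := Finset.sum_mul_sq_le_sq_mul_sq Finset.univ
      (fun k : Fin (m + 1) => Real.sqrt (bernstein m k x))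
      (fun k : Fin (m + 1) => Real.sqrt (bernstein m k x) * d k)
    have e1 : ∀ k : Fin (m + 1),
        Real.sqrt (bernstein m k x) * (Real.sqrt (bernstein m k x) * d k)
          = bernstein m k x * d k := by
      intro k
      rw [← mul_assoc, Real.mul_self_sqrt bernstein_nonneg]
    have e2 : ∀ k : Fin (m + 1), Real.sqrt (bernstein m k x) ^ 2 = bernstein m k x := by
      intro k; exact Real.sq_sqrt bernstein_nonneg
    have e3 : ∀ k : Fin (m + 1), (Real.sqrt (bernstein m k x) * d k) ^ 2
        = ((x : ℝ) - (k : ℝ) / m) ^ 2 * bernstein m k x := by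
      intro k
      have hdk : d k = |(k : ℝ) / m - (x : ℝ)| := rfl
      rw [mul_pow, e2, hdk, _root_.sq_abs]
      ring
    simp only [e1, e2, e3] at this
    exact this
  have hvar : (∑ k : Fin (m + 1), ((x : ℝ) - (k : ℝ) / m) ^ 2 * bernstein m k x)
      = (x : ℝ) * (1 - (x : ℝ)) / m := by
    have := bernstein.variance (n := m) hm.ne' x
    convert this using 2
    rfl
  have hprobR : (∑ k : Fin (m + 1), bernstein m k x) = 1 := bernstein.probability m x
  have hA2 : (∑ k : Fin (m + 1), bernstein m k x * d k) ^ 2 ≤ 1 / (4 * m) := by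
    rw [hprobR, hvar, one_mul] at hA
    refine hA.trans ?_
    rw [div_le_div_iff₀ hmR (by positivity)]
    nlinarith [hxmem.1, hxmem.2, sq_nonneg ((x:ℝ) - 1/2)]
  have hAnonneg : 0 ≤ ∑ k : Fin (m + 1), bernstein m k x * d k :=
    Finset.sum_nonneg fun k _ => mul_nonneg bernstein_nonneg (abs_nonneg _)
  have hbound : (∑ k : Fin (m + 1), bernstein m k x * d k) ≤ 1 / (2 * Real.sqrt m) := by
    have h4 : (1:ℝ) / (4 * m) = (1 / (2 * Real.sqrt m)) ^ 2 := by
      rw [div_pow, one_pow, mul_pow, Real.sq_sqrt hmR.le]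
      norm_num
    rw [h4] at hA2
    have := Real.sqrt_le_sqrt hA2
    rwa [Real.sqrt_sq hAnonneg, Real.sqrt_sq (by positivity)] at this
  calc ‖(∑ k : Fin (m + 1), ((bernstein m k x : ℝ) : ℂ) * f ((k : ℝ) / m)) - f (x : ℝ)‖
      ≤ L * ∑ k : Fin (m + 1), bernstein m k x * d k := step1
    _ ≤ L * (1 / (2 * Real.sqrt m)) := mul_le_mul_of_nonneg_left hbound hL
    _ = L / (2 * Real.sqrt m) := by ring

/-- Uniform polynomial approximation of `v_{2n}/|v_{2n}|` on `I` of
uniformly bounded degree, for an admissible interpolation scheme. -/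
theorem stmt9
    (a b : ℝ) (K₀ : Set ℂ) (ζ : ∀ n : ℕ, Fin (2 * n) → ℂ) (σ : Measure ℂ)
    (hadm : Admissible K₀ (Set.Icc a b) ζ σ) :
    ∀ ε : ℝ, 0 < ε → ∃ l : ℕ, ∃ N : ℕ, ∀ n ≥ N, ∃ T : Polynomial ℂ,
      T.natDegree ≤ l ∧ ∀ x ∈ Set.Icc a b,
        ‖vfun (ζ n) (x : ℂ) / (‖vfun (ζ n) (x : ℂ)‖ : ℂ)
          - T.eval (x : ℂ)‖ < ε := by
  intro ε hε
  obtain ⟨C, hC⟩ := hadm.deriv_bound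
  by_cases hab : a < b
  · -- main case
    have hba : (0:ℝ) < b - a := sub_pos.2 hab
    set C₀ : ℝ := max C 0 with hC₀
    have hC₀0 : 0 ≤ C₀ := le_max_right _ _
    set L : ℝ := C₀ * (b - a) with hLdef
    have hL : 0 ≤ L := mul_nonneg hC₀0 hba.le
    set m : ℕ := ⌈(L / ε) ^ 2⌉₊ + 1 with hmdef
    have hm : 0 < m := Nat.succ_pos _
    have hmR : 0 < (m : ℝ) := by exact_mod_cast hm
    have hsqm : 0 < Real.sqrt m := Real.sqrt_pos.2 hmR
    have herr : L / (2 * Real.sqrt m) < ε := by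
      have h1 : ((L / ε) ^ 2 : ℝ) < m := by
        calc ((L / ε) ^ 2 : ℝ) ≤ ⌈(L / ε) ^ 2⌉₊ := Nat.le_ceil _
          _ < m := by exact_mod_cast Nat.lt_succ_self _
      have h2 : L / ε < Real.sqrt m := (Real.lt_sqrt (by positivity)).2 h1
      rw [div_lt_iff₀ (by positivity)]
      have : L < Real.sqrt m * ε := by
        have := (div_lt_iff₀ hε).1 h2
        linarith
      nlinarith
    refine ⟨m, 0, fun n _ => ?_⟩
    -- the polynomial does not vanish on [a, b]
    have hne : ∀ x ∈ Set.Icc a b, vfun (ζ n) (x : ℂ) ≠ 0 := by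
      intro x hx
      unfold vfun
      refine Finset.prod_ne_zero_iff.2 fun j _ => sub_ne_zero.2 fun h => ?_
      exact hadm.disjI x hx (h ▸ hadm.mem n j)
    -- differentiability of v/|v|
    have hdiffAt : ∀ x ∈ Set.Icc a b, DifferentiableAt ℝ
        (fun y : ℝ => vfun (ζ n) (y : ℂ) / ((‖vfun (ζ n) (y : ℂ)‖ : ℝ) : ℂ)) x := by
      intro x hx
      have h1 : DifferentiableAt ℝ (fun y : ℝ => vfun (ζ n) (y : ℂ)) x := by
        unfold vfun
        apply DifferentiableAt.fun_finsetProd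
        intro j _
        exact (Complex.ofRealCLM.differentiableAt).sub_const (ζ n j)
      have h2 : DifferentiableAt ℝ (fun y : ℝ => ‖vfun (ζ n) (y : ℂ)‖) x :=
        h1.norm ℝ (hne x hx)
      have h3 : DifferentiableAt ℝ
          (fun y : ℝ => ((‖vfun (ζ n) (y : ℂ)‖ : ℝ) : ℂ)) x := by
        have := Complex.ofRealCLM.differentiableAt.comp x h2
        exact this
      exact h1.div h3 (Complex.ofReal_ne_zero.mpr ((norm_ne_zero_iff).mpr (hne x hx)))
    -- Lipschitz estimate on [a, b]
    have hlip : ∀ y ∈ Set.Icc a b, ∀ z ∈ Set.Icc a b,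
        ‖(vfun (ζ n) (y : ℂ) / ((‖vfun (ζ n) (y : ℂ)‖ : ℝ) : ℂ))
          - (vfun (ζ n) (z : ℂ) / ((‖vfun (ζ n) (z : ℂ)‖ : ℝ) : ℂ))‖
          ≤ C₀ * |y - z| := by
      intro y hy z hz
      have hbd : ∀ x ∈ Set.Icc a b, ‖deriv
          (fun y : ℝ => vfun (ζ n) (y : ℂ) / ((‖vfun (ζ n) (y : ℂ)‖ : ℝ) : ℂ)) x‖
            ≤ C₀ := fun x hx => (hC n x hx).trans (le_max_left _ _)
      have := Convex.norm_image_sub_le_of_norm_deriv_le hdiffAt hbd (convex_Icc a b) hz hy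
      simpa [Real.norm_eq_abs] using this
    -- the rescaled function on [0, 1]
    set f : ℝ → ℂ := fun s =>
      vfun (ζ n) ((a + (b - a) * s : ℝ) : ℂ)
        / ((‖vfun (ζ n) ((a + (b - a) * s : ℝ) : ℂ)‖ : ℝ) : ℂ) with hfdef
    have hmem01 : ∀ s ∈ Set.Icc (0:ℝ) 1, a + (b - a) * s ∈ Set.Icc a b := by
      intro s hs
      constructor <;> nlinarith [hs.1, hs.2]
    have hfLip : ∀ s ∈ Set.Icc (0:ℝ) 1, ∀ u ∈ Set.Icc (0:ℝ) 1,
        ‖f s - f u‖ ≤ L * |s - u| := by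
      intro s hs u hu
      calc ‖f s - f u‖ ≤ C₀ * |(a + (b - a) * s) - (a + (b - a) * u)| :=
            hlip _ (hmem01 s hs) _ (hmem01 u hu)
        _ = L * |s - u| := by
            rw [show (a + (b - a) * s) - (a + (b - a) * u) = (b - a) * (s - u) by ring,
              abs_mul, abs_of_pos hba, hLdef]
            ring
    -- the approximating polynomial
    set T : Polynomial ℂ := ∑ k : Fin (m + 1), Polynomial.C (f ((k : ℝ) / m)) *
      ((bernsteinPolynomial ℂ m k).comp
        (Polynomial.C (((b - a : ℝ)) : ℂ)⁻¹ * (Polynomial.X - Polynomial.C (a : ℂ)))) with hTdef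
    refine ⟨T, ?_, ?_⟩
    · -- degree bound
      rw [hTdef]
      refine Polynomial.natDegree_sum_le_of_forall_le _ _ fun k _ => ?_
      refine (Polynomial.natDegree_C_mul_le _ _).trans ?_
      refine (Polynomial.natDegree_comp_le).trans ?_
      have h1 : (bernsteinPolynomial ℂ m k).natDegree ≤ m := by
        unfold bernsteinPolynomial
        refine (Polynomial.natDegree_mul_le).trans ?_
        have hk : (k : ℕ) ≤ m := Nat.lt_succ_iff.mp k.2
        have ha : ((Nat.choose m k : ℂ[X]) * Polynomial.X ^ (k : ℕ)).natDegree ≤ (k : ℕ) := by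
          refine (Polynomial.natDegree_mul_le).trans ?_
          simp [Polynomial.natDegree_natCast, Polynomial.natDegree_pow]
        have hb : ((1 - Polynomial.X : ℂ[X]) ^ (m - (k : ℕ))).natDegree ≤ m - (k : ℕ) := by
          refine (Polynomial.natDegree_pow_le).trans ?_
          have h1X : (1 - Polynomial.X : ℂ[X]).natDegree ≤ 1 := by
            refine (Polynomial.natDegree_sub_le _ _).trans ?_
            simp
          have := Nat.mul_le_mul_left (m - (k : ℕ)) h1X
          omega
        omega
      have h2 : (Polynomial.C (((b - a : ℝ)) : ℂ)⁻¹
          * (Polynomial.X - Polynomial.C (a : ℂ))).natDegree ≤ 1 := by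
        refine (Polynomial.natDegree_mul_le).trans ?_
        simp [Polynomial.natDegree_X_sub_C_le]
      calc (bernsteinPolynomial ℂ m k).natDegree *
            (Polynomial.C (((b - a : ℝ)) : ℂ)⁻¹
              * (Polynomial.X - Polynomial.C (a : ℂ))).natDegree
          ≤ m * 1 := Nat.mul_le_mul h1 h2
        _ = m := by omega
    · -- approximation bound
      intro x hx
      set t : ℝ := (x - a) / (b - a) with htdef
      have ht : t ∈ Set.Icc (0:ℝ) 1 := by
        constructor
        · exact div_nonneg (by linarith [hx.1]) hba.le
        · rw [div_le_one hba]
          linarith [hx.2]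
      have hxt : a + (b - a) * t = x := by
        rw [htdef]
        field_simp
        ring
      -- evaluation of T at x
      have hTeval : T.eval (x : ℂ) = ∑ k : Fin (m + 1),
          ((bernstein m k ⟨t, ht⟩ : ℝ) : ℂ) * f ((k : ℝ) / m) := by
        rw [hTdef, Polynomial.eval_finset_sum]
        refine Finset.sum_congr rfl fun k _ => ?_
        rw [Polynomial.eval_mul, Polynomial.eval_C, Polynomial.eval_comp, Polynomial.eval_mul,
          Polynomial.eval_C, Polynomial.eval_sub, Polynomial.eval_X, Polynomial.eval_C]
        have harg : (((b - a : ℝ) : ℂ))⁻¹ * ((x : ℂ) - (a : ℂ)) = ((t : ℝ) : ℂ) := by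
          rw [htdef]
          push_cast
          rw [div_eq_mul_inv]
          ring
        rw [harg]
        have hb' : (bernsteinPolynomial ℂ m k).eval ((t : ℝ) : ℂ)
            = (((bernsteinPolynomial ℝ m k).eval t : ℝ) : ℂ) := by
          rw [← bernsteinPolynomial.map (algebraMap ℝ ℂ) m k, Polynomial.eval_map,
            ← Complex.coe_algebraMap, Polynomial.eval₂_at_apply]
        rw [hb']
        have hbk : (bernstein m k ⟨t, ht⟩ : ℝ) = (bernsteinPolynomial ℝ m k).eval t := by
          simp [bernstein, Polynomial.toContinuousMapOn_apply]
        rw [hbk]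
        ring
      have hfx : f t = vfun (ζ n) (x : ℂ)
          / ((‖vfun (ζ n) (x : ℂ)‖ : ℝ) : ℂ) := by
        rw [hfdef]
        simp only [hxt]
      have hkey := bern_err m hm f L hL hfLip ⟨t, ht⟩
      rw [← hTeval] at hkey
      have : f (↑(⟨t, ht⟩ : unitInterval)) = f t := rfl
      rw [this, hfx] at hkey
      rw [norm_sub_rev]
      exact lt_of_le_of_lt hkey herr
  · -- degenerate case b ≤ a
    refine ⟨0, 0, fun n _ => ⟨Polynomial.C (vfun (ζ n) (a : ℂ)
      / ((‖vfun (ζ n) (a : ℂ)‖ : ℝ) : ℂ)), by simp, fun x hx => ?_⟩⟩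
    have hxa : x = a := le_antisymm (hx.2.trans (not_lt.1 hab)) hx.1
    rw [hxa, Polynomial.eval_C, sub_self, norm_zero]
    exact hε
end

section
/- Let S ⊆ ℝ and f : S → ℂ with |f(x)| = 1 for all x ∈ S. Then f has bounded variation on S, i.e. V(f,S) := sup{Σ_{j=1}^N |f(x_j) − f(x_{j−1})|} < ∞ (supremum over all finite increasing sequences x_0 < … < x_N in S), if and only if there exists a real-valued function φ : S → ℝ of bounded variation on S such that f(x) = e^{iφ(x)} for all x ∈ S. -/
open MeasureTheory Metric Complex Polynomial Filter Topology Asymptotics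
open scoped Classical ENNReal

open scoped Real

lemma aux_abs_exp (θ : ℝ) :
    ‖Complex.exp (Complex.I * θ) - 1‖ = 2 * |Real.sin (θ / 2)| := by
  rw [mul_comm Complex.I]
  have hre : (Complex.exp (↑θ * Complex.I) - 1).re = Real.cos θ - 1 := by
    simp [Complex.exp_ofReal_mul_I_re]
  have him : (Complex.exp (↑θ * Complex.I) - 1).im = Real.sin θ := by
    simp [Complex.exp_ofReal_mul_I_im]
  rw [Complex.norm_def, Complex.normSq_apply, hre, him]
  have h1 := Real.sin_sq_eq_half_sub (θ / 2)
  rw [show 2 * (θ / 2) = θ by ring] at h1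
  have h2 : Real.sin θ ^ 2 + Real.cos θ ^ 2 = 1 := Real.sin_sq_add_cos_sq θ
  have h3 : (Real.cos θ - 1) * (Real.cos θ - 1) + Real.sin θ * Real.sin θ
      = (2 * |Real.sin (θ / 2)|) ^ 2 := by
    nlinarith [_root_.sq_abs (Real.sin (θ / 2))]
  rw [h3, Real.sqrt_sq (by positivity)]

lemma aux_theta_le {θ : ℝ} (h : |θ| ≤ π) :
    |θ| ≤ π / 2 * ‖Complex.exp (Complex.I * θ) - 1‖ := by
  rw [aux_abs_exp]
  have habs : |Real.sin (θ / 2)| = Real.sin (|θ| / 2) := by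
    rcases le_or_gt 0 θ with hθ | hθ
    · rw [_root_.abs_of_nonneg hθ]
      exact _root_.abs_of_nonneg (Real.sin_nonneg_of_nonneg_of_le_pi (by linarith)
        (by rw [_root_.abs_of_nonneg hθ] at h; linarith [Real.pi_pos]))
    · rw [_root_.abs_of_neg hθ]
      rw [_root_.abs_of_neg hθ] at h
      rw [_root_.abs_of_nonpos, ← Real.sin_neg]
      · ring_nf
      · apply Real.sin_nonpos_of_nonpos_of_neg_pi_le <;> linarith [Real.pi_pos]
  have hπ := Real.pi_pos
  rw [habs]
  calc |θ| = π * (2 / π * (|θ| / 2)) := by field_simp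
    _ ≤ π * Real.sin (|θ| / 2) := by
        apply mul_le_mul_of_nonneg_left _ hπ.le
        exact Real.mul_le_sin (by positivity) (by linarith)
    _ = π / 2 * (2 * Real.sin (|θ| / 2)) := by ring

lemma aux_exp_arg {z : ℂ} (hz : ‖z‖ = 1) :
    Complex.exp (Complex.I * z.arg) = z := by
  have h := Complex.norm_mul_exp_arg_mul_I z
  rw [hz] at h
  simpa [mul_comm] using h

lemma aux_key {θ : ℝ} {w : ℂ} (h1 : |θ| ≤ π) (h2 : Complex.exp (Complex.I * θ) = w) :
    |θ| ≤ π / 2 * ‖w - 1‖ := by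
  have := aux_theta_le h1
  rwa [h2] at this

lemma aux_arg_le {z : ℂ} (hz : ‖z‖ = 1) :
    |z.arg| ≤ π / 2 * ‖z - 1‖ :=
  aux_key (Complex.abs_arg_le_pi z) (aux_exp_arg hz)

lemma aux_Ico_succ {a n : ℤ} (h : a ≤ n) :
    Finset.Ico a (n + 1) = insert n (Finset.Ico a n) := by
  ext x
  simp only [Finset.mem_Ico, Finset.mem_insert]
  omega

lemma aux_prod_tel (g : ℤ → ℂ) (hg : ∀ i, g i ≠ 0) (a : ℤ) :
    ∀ b, a ≤ b → ∏ i ∈ Finset.Ico a b, (g (i + 1) / g i) = g b / g a := by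
  refine Int.le_induction ?_ ?_
  · simp [div_self (hg a)]
  · intro n hn ih
    rw [aux_Ico_succ hn, Finset.prod_insert (by simp), ih, div_mul_div_comm,
      mul_comm (g n) (g a), mul_div_mul_right _ _ (hg n)]

lemma aux_sum_tel (w : ℤ → ℝ) (a : ℤ) :
    ∀ b, a ≤ b → ∑ i ∈ Finset.Ico a b, (w (i + 1) - w i) = w b - w a := by
  refine Int.le_induction ?_ ?_
  · simp
  · intro n hn ih
    rw [aux_Ico_succ hn, Finset.sum_insert (by simp), ih]
    ring

lemma aux_sum_split (g : ℤ → ℝ) {a b c : ℤ} (hab : a ≤ b) (hbc : b ≤ c) :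
    ∑ i ∈ Finset.Ico a b, g i + ∑ i ∈ Finset.Ico b c, g i = ∑ i ∈ Finset.Ico a c, g i := by
  rw [← Finset.sum_union (Finset.Ico_disjoint_Ico_consecutive a b c),
    Finset.Ico_union_Ico_eq_Ico hab hbc]

lemma aux_lip : LipschitzWith 1 (fun t : ℝ => Complex.exp (Complex.I * t)) := by
  have hd : ∀ x : ℝ, HasDerivAt (fun t : ℝ => Complex.exp (Complex.I * t))
      (Complex.I * Complex.exp (Complex.I * x)) x := by
    intro x
    have h1 : HasDerivAt (fun t : ℝ => (Complex.I * t : ℂ)) Complex.I x := by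
      simpa using (Complex.ofRealCLM.hasDerivAt (x := x)).const_mul Complex.I
    simpa [mul_comm] using h1.cexp
  apply lipschitzWith_of_nnnorm_deriv_le (fun x => (hd x).differentiableAt)
  intro x
  rw [(hd x).deriv]
  simp [← NNReal.coe_le_coe, ← norm_toNNReal, Complex.norm_exp]


/-- A unimodular function on `S ⊆ ℝ` has bounded variation iff it is
`e^{iφ}` for some real-valued function `φ` of bounded variation on `S`. -/
theorem stmt15
    (S : Set ℝ) (f : ℝ → ℂ) (hf : ∀ x ∈ S, ‖f x‖ = 1) :
    BoundedVariationOn f S ↔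
      ∃ φ : ℝ → ℝ, BoundedVariationOn φ S ∧
        ∀ x ∈ S, f x = Complex.exp (Complex.I * (φ x : ℂ)) := by
  classical
  constructor
  · intro hbv
    by_cases hS : S.Nonempty
    swap
    · refine ⟨0, ?_, fun x hx => absurd ⟨x, hx⟩ hS⟩
      rw [Set.not_nonempty_iff_eq_empty] at hS
      subst hS
      simp [BoundedVariationOn, eVariationOn.subsingleton _ Set.subsingleton_empty]
    obtain ⟨x₀, hx₀⟩ := hS
    have hlbv : LocallyBoundedVariationOn f S := hbv.locallyBoundedVariationOn
    set v : ℝ → ℝ := fun x => variationOnFromTo f S x₀ x with hv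
    have hvmono : MonotoneOn v S := variationOnFromTo.monotoneOn hlbv hx₀
    have hfne : ∀ x ∈ S, f x ≠ 0 := by
      intro x hx h
      have := hf x hx
      rw [h] at this
      simp at this
    have hA : ∀ x ∈ S, ∀ y ∈ S, x ≤ y → ‖f y - f x‖ ≤ v y - v x := by
      intro x hx y hy hxy
      have hadd := variationOnFromTo.add hlbv hx₀ hx hy
      have heq : variationOnFromTo f S x y = (eVariationOn f (S ∩ Set.Icc x y)).toReal :=
        variationOnFromTo.eq_of_le f S hxy
      have hd : dist (f x) (f y) ≤ (eVariationOn f (S ∩ Set.Icc x y)).toReal :=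
        (hbv.mono Set.inter_subset_left).dist_le ⟨hx, le_refl x, hxy⟩ ⟨hy, hxy, le_refl y⟩
      rw [Complex.dist_eq, show f x - f y = -(f y - f x) by ring, norm_neg,
        ← heq] at hd
      linarith
    have hA' : ∀ x ∈ S, ∀ y ∈ S, ‖f y - f x‖ ≤ |v y - v x| := by
      intro x hx y hy
      rcases le_total x y with h | h
      · exact (hA x hx y hy h).trans (le_abs_self _)
      · rw [show f y - f x = -(f x - f y) by ring, norm_neg, _root_.abs_sub_comm]
        exact (hA y hy x hx h).trans (le_abs_self _)
    set K : ℝ → ℤ := fun x => ⌊4 * v x⌋ with hK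
    have hKle : ∀ x, (K x : ℝ) ≤ 4 * v x := fun x => Int.floor_le _
    have hKlt : ∀ x, 4 * v x < K x + 1 := fun x => Int.lt_floor_add_one _
    set b : ℤ → ℝ := fun m => if h : ∃ x, x ∈ S ∧ K x = m then h.choose else x₀ with hb
    have hbS : ∀ m, b m ∈ S := by
      intro m
      rw [hb]
      dsimp only
      split_ifs with h
      exacts [h.choose_spec.1, hx₀]
    have hbK : ∀ m, (∃ x, x ∈ S ∧ K x = m) → K (b m) = m := by
      intro m h
      rw [hb]
      dsimp only
      rw [dif_pos h]
      exact h.choose_spec.2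
    set M : ℤ → ℤ := fun m =>
      if h : ∃ lb : ℤ, ((∃ x, x ∈ S ∧ K x = lb) ∧ lb ≤ m) ∧
          ∀ z : ℤ, ((∃ x, x ∈ S ∧ K x = z) ∧ z ≤ m) → z ≤ lb then h.choose else K x₀ with hM
    have hMex : ∀ m : ℤ, (∃ x, x ∈ S ∧ K x ≤ m) →
        ∃ lb : ℤ, ((∃ x, x ∈ S ∧ K x = lb) ∧ lb ≤ m) ∧
          ∀ z : ℤ, ((∃ x, x ∈ S ∧ K x = z) ∧ z ≤ m) → z ≤ lb := by
      rintro m ⟨x, hxS, hxm⟩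
      exact Int.exists_greatest_of_bdd ⟨m, fun z hz => hz.2⟩ ⟨K x, ⟨x, hxS, rfl⟩, hxm⟩
    have hMspec : ∀ m : ℤ, (∃ x, x ∈ S ∧ K x ≤ m) →
        ((∃ x, x ∈ S ∧ K x = M m) ∧ M m ≤ m) ∧
          ∀ z : ℤ, ((∃ x, x ∈ S ∧ K x = z) ∧ z ≤ m) → z ≤ M m := by
      intro m hm
      rw [hM]
      dsimp only
      rw [dif_pos (hMex m hm)]
      exact (hMex m hm).choose_spec
    set G : ℤ → ℝ := fun m => b (M m) with hG
    have hGS : ∀ m, G m ∈ S := fun m => hbS _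
    have hGK : ∀ m, (∃ x, x ∈ S ∧ K x ≤ m) → K (G m) = M m := fun m hm =>
      hbK _ ((hMspec m hm).1.1)
    have hP : ∀ m m' : ℤ, m ≤ m' → (∃ x, x ∈ S ∧ K x ≤ m) → (∃ x, x ∈ S ∧ K x ≤ m') := by
      rintro m m' h ⟨x, hxS, hxm⟩
      exact ⟨x, hxS, hxm.trans h⟩
    have hGmono : ∀ m m' : ℤ, (∃ x, x ∈ S ∧ K x ≤ m) → m ≤ m' → v (G m) ≤ v (G m') := by
      intro m m' hm hmm'
      have hm' := hP m m' hmm' hm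
      have h1 := hMspec m hm
      have h2 := hMspec m' hm'
      have hle : M m ≤ M m' := h2.2 (M m) ⟨h1.1.1, h1.1.2.trans hmm'⟩
      rcases eq_or_lt_of_le hle with heq | hlt
      · rw [hG]
        dsimp only
        rw [heq]
      · have e1 : (M m : ℝ) ≤ 4 * v (G m) := by
          rw [← hGK m hm]; exact hKle _
        have e2 : 4 * v (G m) < M m + 1 := by
          rw [show ((M m : ℤ) : ℝ) = ((K (G m) : ℤ) : ℝ) by rw [hGK m hm]]
          exact hKlt _
        have e3 : (M m' : ℝ) ≤ 4 * v (G m') := by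
          rw [← hGK m' hm']; exact hKle _
        have e4 : (M m : ℝ) + 1 ≤ M m' := by exact_mod_cast hlt
        linarith
    set δ : ℤ → ℝ := fun i => Complex.arg (f (G (i + 1)) / f (G i)) with hδdef
    have habsq : ∀ m : ℤ, ‖f (G (m + 1)) / f (G m)‖ = 1 := by
      intro m
      rw [norm_div, hf _ (hGS _), hf _ (hGS _)]
      norm_num
    have hδexp : ∀ i, Complex.exp (Complex.I * δ i) = f (G (i + 1)) / f (G i) :=
      fun i => aux_exp_arg (habsq i)
    have hδbd : ∀ i : ℤ, (∃ x, x ∈ S ∧ K x ≤ i) →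
        |δ i| ≤ π / 2 * (v (G (i + 1)) - v (G i)) := by
      intro i hi
      have h1 : |δ i| ≤ π / 2 * ‖f (G (i + 1)) / f (G i) - 1‖ :=
        aux_arg_le (habsq i)
      have h2 : ‖f (G (i + 1)) / f (G i) - 1‖
          = ‖f (G (i + 1)) - f (G i)‖ := by
        rw [div_sub_one (hfne _ (hGS i)), norm_div, hf _ (hGS i), div_one]
      have h3 := hA' (G i) (hGS i) (G (i + 1)) (hGS (i + 1))
      have h4 : v (G i) ≤ v (G (i + 1)) := hGmono i (i + 1) hi (by linarith)
      rw [h2] at h1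
      rw [_root_.abs_of_nonneg (by linarith)] at h3
      refine h1.trans ?_
      have hπ := Real.pi_pos
      nlinarith
    set m₀ : ℤ := K x₀ with hm₀
    set A : ℤ → ℝ := fun m => (∑ i ∈ Finset.Ico m₀ m, δ i) - ∑ i ∈ Finset.Ico m m₀, δ i
      with hAdef
    have hexpA : ∀ m : ℤ, Complex.exp (Complex.I * A m) = f (G m) / f (G m₀) := by
      intro m
      rcases le_total m₀ m with h | h
      · have hAm : A m = ∑ i ∈ Finset.Ico m₀ m, δ i := by
          rw [hAdef]
          dsimp only
          rw [Finset.Ico_eq_empty (not_lt.2 h), Finset.sum_empty, sub_zero]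
        rw [hAm, show (Complex.I * ((∑ i ∈ Finset.Ico m₀ m, δ i : ℝ) : ℂ))
            = ∑ i ∈ Finset.Ico m₀ m, Complex.I * (δ i : ℂ) by
          push_cast; rw [Finset.mul_sum], Complex.exp_sum]
        rw [Finset.prod_congr rfl fun i _ => hδexp i]
        exact aux_prod_tel (fun i => f (G i)) (fun i => hfne _ (hGS i)) m₀ m h
      · have hAm : A m = -∑ i ∈ Finset.Ico m m₀, δ i := by
          rw [hAdef]
          dsimp only
          rw [Finset.Ico_eq_empty (not_lt.2 h), Finset.sum_empty, zero_sub]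
        rw [hAm, show (Complex.I * ((-∑ i ∈ Finset.Ico m m₀, δ i : ℝ) : ℂ))
            = -∑ i ∈ Finset.Ico m m₀, Complex.I * (δ i : ℂ) by
          push_cast; rw [mul_neg, Finset.mul_sum], Complex.exp_neg, Complex.exp_sum]
        rw [Finset.prod_congr rfl fun i _ => hδexp i,
          aux_prod_tel (fun i => f (G i)) (fun i => hfne _ (hGS i)) m m₀ h, inv_div]
    have hAdiff : ∀ m m' : ℤ, m' ≤ m → A m - A m' = ∑ i ∈ Finset.Ico m' m, δ i := by
      intro m m' h
      rcases le_total m₀ m' with h1 | h1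
      · rw [hAdef]
        dsimp only
        rw [Finset.Ico_eq_empty (not_lt.2 h1), Finset.Ico_eq_empty (not_lt.2 (h1.trans h)),
          Finset.sum_empty, sub_zero, sub_zero, ← aux_sum_split δ h1 h]
        ring
      · rcases le_total m₀ m with h2 | h2
        · rw [hAdef]
          dsimp only
          rw [Finset.Ico_eq_empty (not_lt.2 h2), Finset.Ico_eq_empty (not_lt.2 h1),
            Finset.sum_empty, ← aux_sum_split δ h1 h2]
          ring
        · rw [hAdef]
          dsimp only
          rw [Finset.Ico_eq_empty (not_lt.2 h2), Finset.Ico_eq_empty (not_lt.2 (h.trans h2)),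
            Finset.sum_empty, ← aux_sum_split δ h h2]
          ring
    have hAbd : ∀ m m' : ℤ, (∃ x, x ∈ S ∧ K x ≤ m') → m' ≤ m →
        |A m - A m'| ≤ π / 2 * (v (G m) - v (G m')) := by
      intro m m' hm' h
      rw [hAdiff m m' h]
      calc |∑ i ∈ Finset.Ico m' m, δ i| ≤ ∑ i ∈ Finset.Ico m' m, |δ i| :=
            Finset.abs_sum_le_sum_abs _ _
        _ ≤ ∑ i ∈ Finset.Ico m' m, π / 2 * (v (G (i + 1)) - v (G i)) := by
            refine Finset.sum_le_sum fun i hi => ?_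
            exact hδbd i (hP m' i (Finset.mem_Ico.1 hi).1 hm')
        _ = π / 2 * (v (G m) - v (G m')) := by
            rw [← Finset.mul_sum, aux_sum_tel (fun i => v (G i)) m' m h]
    set φ : ℝ → ℝ := fun x =>
      Complex.arg (f (G m₀)) + A (K x) + Complex.arg (f x / f (G (K x))) with hφdef
    have habsq2 : ∀ x ∈ S, ‖f x / f (G (K x))‖ = 1 := by
      intro x hx
      rw [norm_div, hf _ hx, hf _ (hGS _)]
      norm_num
    have hexpφ : ∀ x ∈ S, Complex.exp (Complex.I * φ x) = f x := by
      intro x hx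
      rw [hφdef]
      dsimp only
      rw [show (Complex.I * ((Complex.arg (f (G m₀)) + A (K x)
            + Complex.arg (f x / f (G (K x))) : ℝ) : ℂ))
          = Complex.I * (Complex.arg (f (G m₀)) : ℝ) + Complex.I * (A (K x) : ℝ)
            + Complex.I * ((Complex.arg (f x / f (G (K x))) : ℝ) : ℂ) by push_cast; ring,
        Complex.exp_add, Complex.exp_add, aux_exp_arg (hf _ (hGS m₀)), hexpA,
        aux_exp_arg (habsq2 x hx)]
      field_simp
      exact mul_div_cancel_left₀ _ (mul_ne_zero (hfne _ (hGS m₀)) (hfne _ (hGS (K x))))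
    have hcell : ∀ x ∈ S, |v x - v (G (K x))| ≤ 1 / 4 := by
      intro x hx
      have hPx : ∃ z, z ∈ S ∧ K z ≤ K x := ⟨x, hx, le_refl _⟩
      have hMx : M (K x) = K x :=
        le_antisymm ((hMspec _ hPx).1.2) ((hMspec _ hPx).2 (K x) ⟨⟨x, hx, rfl⟩, le_refl _⟩)
      have h1 : K (G (K x)) = K x := by rw [hGK _ hPx, hMx]
      have e1 := hKle x
      have e2 := hKlt x
      have e3 := hKle (G (K x))
      have e4 := hKlt (G (K x))
      rw [h1] at e3 e4
      rw [abs_le]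
      constructor <;> linarith
    have hargS : ∀ x ∈ S, |Complex.arg (f x / f (G (K x)))| ≤ π / 8 := by
      intro x hx
      have h1 := aux_arg_le (habsq2 x hx)
      have h2 : ‖f x / f (G (K x)) - 1‖ = ‖f x - f (G (K x))‖ := by
        rw [div_sub_one (hfne _ (hGS _)), norm_div, hf _ (hGS _), div_one]
      have h3 := hA' (G (K x)) (hGS _) x hx
      have h4 := hcell x hx
      rw [h2] at h1
      have hπ := Real.pi_pos
      nlinarith
    have hmain : ∀ x ∈ S, ∀ y ∈ S, x ≤ y → |φ y - φ x| ≤ π * (v y - v x) := by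
      intro x hx y hy hxy
      have hπ := Real.pi_pos
      have hvxy : v x ≤ v y := hvmono hx hy hxy
      have hjk : K x ≤ K y := Int.floor_mono (by linarith)
      have hPx : ∃ z, z ∈ S ∧ K z ≤ K x := ⟨x, hx, le_refl _⟩
      have hAb := hAbd (K y) (K x) hPx hjk
      have hcx := hcell x hx
      have hcy := hcell y hy
      have hax := hargS x hx
      have hay := hargS y hy
      rw [abs_le] at hcx hcy
      have crude : |φ y - φ x| ≤ π / 2 * ((v y - v x) + 1) := by
        have hdecomp : φ y - φ x = (A (K y) - A (K x))
            + Complex.arg (f y / f (G (K y))) - Complex.arg (f x / f (G (K x))) := by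
          rw [hφdef]; ring
        rw [hdecomp]
        have t1 : |(A (K y) - A (K x)) + Complex.arg (f y / f (G (K y)))
            - Complex.arg (f x / f (G (K x)))|
            ≤ |A (K y) - A (K x)| + |Complex.arg (f y / f (G (K y)))|
              + |Complex.arg (f x / f (G (K x)))| :=
          (abs_sub _ _).trans (by gcongr; exact abs_add_le _ _)
        have hvGb : v (G (K y)) - v (G (K x)) ≤ (v y - v x) + 1 / 2 := by linarith
        have : |A (K y) - A (K x)| ≤ π / 2 * ((v y - v x) + 1 / 2) := by
          refine hAb.trans ?_
          nlinarith
        nlinarith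
      rcases le_total 1 (v y - v x) with hΔ | hΔ
      · nlinarith
      · have hle_pi : |φ y - φ x| ≤ π := by nlinarith
        have hexp : Complex.exp (Complex.I * ((φ y - φ x : ℝ) : ℂ)) = f y / f x := by
          rw [show (Complex.I * ((φ y - φ x : ℝ) : ℂ))
              = Complex.I * (φ y : ℝ) - Complex.I * ((φ x : ℝ) : ℂ) by push_cast; ring,
            Complex.exp_sub, hexpφ y hy, hexpφ x hx]
        have h1 := aux_key hle_pi hexp
        have h2 : ‖f y / f x - 1‖ = ‖f y - f x‖ := by
          rw [div_sub_one (hfne _ hx), norm_div, hf _ hx, div_one]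
        have h3 := hA x hx y hy hxy
        rw [h2] at h1
        nlinarith
    refine ⟨φ, ?_, fun x hx => (hexpφ x hx).symm⟩
    have hvb : ∀ x ∈ S, |v x| ≤ (eVariationOn f S).toReal := by
      intro x hx
      rcases le_total x₀ x with h | h
      · rw [hv]
        dsimp only
        rw [variationOnFromTo.eq_of_le f S h,
          _root_.abs_of_nonneg ENNReal.toReal_nonneg]
        exact ENNReal.toReal_mono hbv (eVariationOn.mono f Set.inter_subset_left)
      · rw [hv]
        dsimp only
        rw [variationOnFromTo.eq_of_ge f S h, abs_neg,
          _root_.abs_of_nonneg ENNReal.toReal_nonneg]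
        exact ENNReal.toReal_mono hbv (eVariationOn.mono f Set.inter_subset_left)
    have hbound : eVariationOn φ S
        ≤ ENNReal.ofReal (π * (2 * (eVariationOn f S).toReal)) := by
      apply iSup_le
      rintro ⟨n, u, hu, us⟩
      calc ∑ i ∈ Finset.range n, edist (φ (u (i + 1))) (φ (u i))
          ≤ ∑ i ∈ Finset.range n, ENNReal.ofReal (π * (v (u (i + 1)) - v (u i))) := by
            refine Finset.sum_le_sum fun i _ => ?_
            rw [edist_dist, Real.dist_eq]
            exact ENNReal.ofReal_le_ofReal
              (hmain (u i) (us i) (u (i + 1)) (us (i + 1)) (hu (Nat.le_succ i)))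
        _ = ENNReal.ofReal (∑ i ∈ Finset.range n, π * (v (u (i + 1)) - v (u i))) :=
            (ENNReal.ofReal_sum_of_nonneg fun i _ => mul_nonneg Real.pi_pos.le
              (sub_nonneg.2 (hvmono (us i) (us (i + 1)) (hu (Nat.le_succ i))))).symm
        _ ≤ ENNReal.ofReal (π * (2 * (eVariationOn f S).toReal)) := by
            apply ENNReal.ofReal_le_ofReal
            rw [← Finset.mul_sum, Finset.sum_range_sub fun i => v (u i)]
            have h1 := hvb (u n) (us n)
            have h2 := hvb (u 0) (us 0)
            rw [abs_le] at h1 h2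
            nlinarith [Real.pi_pos]
    exact ne_top_of_le_ne_top ENNReal.ofReal_ne_top hbound
  · rintro ⟨φ, hφbv, hφeq⟩
    have h1 : eVariationOn f S
        = eVariationOn ((fun t : ℝ => Complex.exp (Complex.I * t)) ∘ φ) S :=
      eVariationOn.eq_of_eqOn fun x hx => hφeq x hx
    have h2 : BoundedVariationOn ((fun t : ℝ => Complex.exp (Complex.I * t)) ∘ φ) S :=
      aux_lip.comp_boundedVariationOn hφbv
    rw [BoundedVariationOn, h1]
    exact h2
end

section
/- Let I_m = {[a_j,b_j]}_{j=1}^m be a system of closed intervals of ℝ with a_1 ≤ b_1 < a_2 ≤ b_2 < … < a_m ≤ b_m, and let Θ be its angle function. Then 0 ≤ Θ(ξ) ≤ π for every ξ ∈ ℂ; if ξ ∉ ∪_{j=1}^m [a_j,b_j] then Θ(ξ) < π; and if ξ ∈ [a_j, b_j) for some j then Θ(ξ) = π. -/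
open MeasureTheory Metric Complex Polynomial Filter Topology Asymptotics
open scoped Classical ENNReal

section stmt18aux


private lemma sq_trick18 {p q : ℝ} (hp : 0 ≤ p) (hq : 0 ≤ q) (h : p ^ 2 ≤ q ^ 2) : p ≤ q := by
  have := Real.sqrt_le_sqrt h
  rwa [Real.sqrt_sq hp, Real.sqrt_sq hq] at this

private lemma div_sqrt_mono18 {c u v : ℝ} (hc : c ≠ 0) (huv : u ≤ v) :
    u / Real.sqrt (u ^ 2 + c ^ 2) ≤ v / Real.sqrt (v ^ 2 + c ^ 2) := by
  have hc2 : 0 < c ^ 2 := by positivity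
  have hA : 0 < Real.sqrt (u ^ 2 + c ^ 2) := Real.sqrt_pos.2 (by nlinarith [sq_nonneg u])
  have hB : 0 < Real.sqrt (v ^ 2 + c ^ 2) := Real.sqrt_pos.2 (by nlinarith [sq_nonneg v])
  have hA2 : Real.sqrt (u ^ 2 + c ^ 2) ^ 2 = u ^ 2 + c ^ 2 :=
    Real.sq_sqrt (by nlinarith [sq_nonneg u])
  have hB2 : Real.sqrt (v ^ 2 + c ^ 2) ^ 2 = v ^ 2 + c ^ 2 :=
    Real.sq_sqrt (by nlinarith [sq_nonneg v])
  rw [div_le_div_iff₀ hA hB]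
  rcases le_or_gt u 0 with hu | hu
  · rcases le_or_gt v 0 with hv | hv
    · have hp : 0 ≤ (-v) * Real.sqrt (u ^ 2 + c ^ 2) := mul_nonneg (by linarith) hA.le
      have hq : 0 ≤ (-u) * Real.sqrt (v ^ 2 + c ^ 2) := mul_nonneg (by linarith) hB.le
      have hvu : v ^ 2 ≤ u ^ 2 := by nlinarith
      have key : (-v) * Real.sqrt (u ^ 2 + c ^ 2) ≤ (-u) * Real.sqrt (v ^ 2 + c ^ 2) :=
        sq_trick18 hp hq (by nlinarith [hA2, hB2])
      linarith
    · have h1 : u * Real.sqrt (v ^ 2 + c ^ 2) ≤ 0 := mul_nonpos_of_nonpos_of_nonneg hu hB.le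
      have h2 : 0 ≤ v * Real.sqrt (u ^ 2 + c ^ 2) := mul_nonneg hv.le hA.le
      linarith
  · have hv : 0 < v := lt_of_lt_of_le hu huv
    have hp : 0 ≤ u * Real.sqrt (v ^ 2 + c ^ 2) := mul_nonneg hu.le hB.le
    have hq : 0 ≤ v * Real.sqrt (u ^ 2 + c ^ 2) := mul_nonneg hv.le hA.le
    have huv2 : u ^ 2 ≤ v ^ 2 := by nlinarith
    exact sq_trick18 hp hq (by nlinarith [hA2, hB2])

private lemma arccos_antitone18 : Antitone Real.arccos := fun x y h => by
  simp only [Real.arccos]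
  linarith [Real.monotone_arcsin h]

private lemma arg_anti18 {z w : ℂ} (him : z.im = w.im) (hpos : 0 < z.im) (hre : z.re ≤ w.re) :
    Complex.arg w ≤ Complex.arg z := by
  have hwpos : 0 < w.im := him ▸ hpos
  rw [Complex.arg_of_im_pos hpos, Complex.arg_of_im_pos hwpos]
  have habs : ∀ ζ : ℂ, ‖ζ‖ = Real.sqrt (ζ.re ^ 2 + ζ.im ^ 2) := fun ζ => by
    rw [Complex.norm_def, Complex.normSq_apply]; ring_nf
  apply arccos_antitone18
  rw [habs, habs, ← him]
  exact div_sqrt_mono18 hpos.ne' hre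

private lemma tele18 : ∀ (m : ℕ) (u v : Fin m → ℝ) (L U : ℝ), (∀ j, u j ≤ v j) →
    (∀ j k, j < k → v j ≤ u k) → (∀ j, L ≤ u j) → (∀ j, v j ≤ U) → L ≤ U →
    ∑ j, (v j - u j) ≤ U - L := by
  intro m
  induction m with
  | zero => intro u v L U _ _ _ _ hLU; simp; linarith
  | succ n ih =>
    intro u v L U h1 h2 hL hU hLU
    rw [Fin.sum_univ_succ]
    have key := ih (fun j => u j.succ) (fun j => v j.succ) (v 0) U
      (fun j => h1 _) (fun j k hjk => h2 _ _ (Fin.succ_lt_succ_iff.2 hjk))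
      (fun j => h2 0 j.succ (Fin.succ_pos j)) (fun j => hU _) (hU 0)
    have := hL 0; have := h1 0
    linarith

private lemma argA_ofReal18 (r : ℝ) : argA (r : ℂ) = if 0 < r then 0 else Real.pi := by
  unfold argA
  rcases lt_trichotomy r 0 with h | h | h
  · rw [if_neg (by exact_mod_cast h.ne), Complex.arg_ofReal_of_neg h, if_neg (not_lt.2 h.le)]
  · subst h; simp
  · rw [if_neg (by exact_mod_cast h.ne'), Complex.arg_ofReal_of_nonneg h.le, if_pos h]

private lemma ang_real18 (x α β : ℝ) (h : α ≤ β) :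
    ang (x : ℂ) α β = if α ≤ x ∧ x < β then Real.pi else 0 := by
  unfold ang
  have e1 : (α : ℂ) - (x : ℂ) = ((α - x : ℝ) : ℂ) := by push_cast; ring
  have e2 : (β : ℂ) - (x : ℂ) = ((β - x : ℝ) : ℂ) := by push_cast; ring
  rw [e1, e2, argA_ofReal18, argA_ofReal18]
  rcases lt_or_ge x α with h1 | h1
  · rw [if_pos (sub_pos.2 h1), if_pos (sub_pos.2 (h1.trans_le h)),
      if_neg (fun hc => absurd hc.1 (not_le.2 h1))]
    simp
  · rcases lt_or_ge x β with h2 | h2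
    · rw [if_neg (not_lt.2 (by linarith)), if_pos (sub_pos.2 h2), if_pos ⟨h1, h2⟩]
      rw [sub_zero, _root_.abs_of_nonneg Real.pi_pos.le]
    · rw [if_neg (not_lt.2 (by linarith)), if_neg (not_lt.2 (by linarith)),
        if_neg (fun hc => absurd hc.2 (not_lt.2 h2))]
      simp

private lemma theta_real18 {m : ℕ} (a b : Fin m → ℝ) (hab : ∀ j, a j ≤ b j) (x : ℝ) :
    theta a b (x : ℂ) = ∑ j, if a j ≤ x ∧ x < b j then Real.pi else 0 :=
  Finset.sum_congr rfl fun j _ => ang_real18 x (a j) (b j) (hab j)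

private lemma theta_nonneg18 {m : ℕ} (a b : Fin m → ℝ) (ξ : ℂ) : 0 ≤ theta a b ξ :=
  Finset.sum_nonneg fun j _ => abs_nonneg _

private lemma theta_lt_pi_of_im_neg18 {m : ℕ} (a b : Fin m → ℝ) (hab : ∀ j, a j ≤ b j)
    (hord : ∀ j k : Fin m, j < k → b j < a k) (ξ : ℂ) (hy : ξ.im < 0) :
    theta a b ξ < Real.pi := by
  have him : ∀ t : ℝ, ((t : ℂ) - ξ).im = -ξ.im := fun t => by
    simp [Complex.sub_im]
  have hpos : ∀ t : ℝ, 0 < ((t : ℂ) - ξ).im := fun t => by rw [him]; linarith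
  have hne : ∀ t : ℝ, (t : ℂ) - ξ ≠ 0 := fun t h0 => by
    have := hpos t; rw [h0] at this; simp at this
  set f : ℝ → ℝ := fun t => Complex.arg ((t : ℂ) - ξ) with hf
  have hargA : ∀ t : ℝ, argA ((t : ℂ) - ξ) = f t := fun t => if_neg (hne t)
  have f0 : ∀ t, 0 < f t := fun t =>
    lt_of_le_of_ne (Complex.arg_nonneg_iff.2 (hpos t).le)
      (fun h => absurd ((Complex.arg_eq_zero_iff.1 h.symm).2) (hpos t).ne')
  have fpi : ∀ t, f t < Real.pi := fun t =>
    lt_of_le_of_ne (Complex.arg_le_pi _)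
      (fun h => absurd ((Complex.arg_eq_pi_iff.1 h).2) (hpos t).ne')
  have fanti : ∀ t s : ℝ, t ≤ s → f s ≤ f t := fun t s hts =>
    arg_anti18 ((him t).trans (him s).symm) (hpos t) (by simp [Complex.sub_re, hts])
  have hang : ∀ j, ang ξ (a j) (b j) = f (a j) - f (b j) := fun j => by
    unfold ang
    rw [hargA, hargA, _root_.abs_of_nonneg (sub_nonneg.2 (fanti _ _ (hab j)))]
  cases m with
  | zero =>
    have : theta a b ξ = 0 := by simp [theta]
    rw [this]; exact Real.pi_pos
  | succ n =>
    have hth : theta a b ξ = ∑ j, ((-f (b j)) - (-f (a j))) := by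
      unfold theta
      exact Finset.sum_congr rfl fun j _ => by rw [hang j]; ring
    rw [hth]
    have hLU := tele18 (n + 1) (fun j => -f (a j)) (fun j => -f (b j))
      (-f (a 0)) (-f (b (Fin.last n)))
      (fun j => neg_le_neg (fanti _ _ (hab j)))
      (fun j k hjk => neg_le_neg (fanti _ _ (hord j k hjk).le))
      (fun j => by
        rcases eq_or_ne j 0 with rfl | hj
        · exact le_refl _
        · exact neg_le_neg (fanti _ _ ((hab 0).trans (hord 0 j (Fin.pos_of_ne_zero hj)).le)))
      (fun j => by
        rcases eq_or_ne j (Fin.last n) with rfl | hj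
        · exact le_refl _
        · exact neg_le_neg (fanti _ _ ((hord j (Fin.last n)
            (lt_of_le_of_ne (Fin.le_last j) hj)).trans_le (hab (Fin.last n))).le))
      (neg_le_neg (fanti _ _ ((hab 0).trans (by
        rcases eq_or_ne (0 : Fin (n+1)) (Fin.last n) with h0 | h0
        · rw [h0]
        · exact ((hord 0 (Fin.last n) (lt_of_le_of_ne (Fin.le_last 0) h0)).trans_le
            (hab (Fin.last n))).le))))
    have := f0 (b (Fin.last n))
    have := fpi (a 0)
    linarith

private lemma theta_conj18 {m : ℕ} (a b : Fin m → ℝ) (ξ : ℂ) (hy : ξ.im ≠ 0) :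
    theta a b ((starRingEnd ℂ) ξ) = theta a b ξ := by
  unfold theta
  refine Finset.sum_congr rfl fun j _ => ?_
  unfold ang
  have key : ∀ t : ℝ, argA ((t : ℂ) - (starRingEnd ℂ) ξ) = -argA ((t : ℂ) - ξ) := fun t => by
    have hz : ((t : ℂ) - ξ).im ≠ 0 := by simp [Complex.sub_im, hy]
    have hne : (t : ℂ) - ξ ≠ 0 := fun h0 => by rw [h0] at hz; simp at hz
    have hconj : (t : ℂ) - (starRingEnd ℂ) ξ = (starRingEnd ℂ) ((t : ℂ) - ξ) := by
      rw [map_sub, Complex.conj_ofReal]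
    have hnec : (t : ℂ) - (starRingEnd ℂ) ξ ≠ 0 := by
      rw [hconj]
      intro h
      exact hne (by simpa using congrArg (starRingEnd ℂ) h)
    rw [argA, if_neg hnec, argA, if_neg hne, hconj, Complex.arg_conj,
      if_neg (fun h => absurd (Complex.arg_eq_pi_iff.1 h).2 hz)]
  rw [key, key]
  rw [neg_sub_neg, abs_sub_comm]

end stmt18aux

/-- The angle function `Θ` of a system of ordered intervals satisfies
`0 ≤ Θ ≤ π` everywhere, `Θ(ξ) < π` off the union of the intervals, and `Θ(ξ) = π` on
each `[a_j, b_j)`. -/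
theorem stmt18
    {m : ℕ} (a b : Fin m → ℝ) (hab : ∀ j, a j ≤ b j)
    (hord : ∀ j k : Fin m, j < k → b j < a k) :
    (∀ ξ : ℂ, 0 ≤ theta a b ξ ∧ theta a b ξ ≤ Real.pi) ∧
    (∀ ξ : ℂ, ξ ∉ cemb (⋃ j, Set.Icc (a j) (b j)) → theta a b ξ < Real.pi) ∧
    (∀ j : Fin m, ∀ x : ℝ, x ∈ Set.Ico (a j) (b j) → theta a b (x : ℂ) = Real.pi) := by
  -- uniqueness of the interval containing x
  have huniq : ∀ x : ℝ, ∀ j k : Fin m, (a j ≤ x ∧ x < b j) → (a k ≤ x ∧ x < b k) → j = k := by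
    intro x j k hj hk
    by_contra hne
    rcases lt_or_gt_of_ne hne with h | h
    · have := hord j k h; linarith [hk.1, hj.2]
    · have := hord k j h; linarith [hj.1, hk.2]
  have hlt : ∀ ξ : ℂ, ξ.im ≠ 0 → theta a b ξ < Real.pi := by
    intro ξ hy
    rcases lt_or_gt_of_ne hy with h | h
    · exact theta_lt_pi_of_im_neg18 a b hab hord ξ h
    · rw [← theta_conj18 a b ξ hy]
      exact theta_lt_pi_of_im_neg18 a b hab hord _ (by rw [Complex.conj_im]; linarith)
  -- bound for real points
  have hreal_le : ∀ x : ℝ, theta a b (x : ℂ) ≤ Real.pi := by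
    intro x
    rw [theta_real18 a b hab x]
    by_cases hex : ∃ j : Fin m, a j ≤ x ∧ x < b j
    · obtain ⟨j, hj⟩ := hex
      rw [Finset.sum_eq_single j
        (fun k _ hk => if_neg (fun hc => hk (huniq x k j hc hj)))
        (fun h => absurd (Finset.mem_univ j) h)]
      rw [if_pos hj]
    · push_neg at hex
      rw [Finset.sum_eq_zero (fun k _ => if_neg (fun hc => (not_le.2 hc.2) (hex k hc.1)))]
      exact Real.pi_pos.le
  refine ⟨?_, ?_, ?_⟩
  · intro ξ
    refine ⟨theta_nonneg18 a b ξ, ?_⟩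
    by_cases hy : ξ.im = 0
    · have hξ : ξ = ((ξ.re : ℝ) : ℂ) := Complex.ext (by simp) (by simp [hy])
      rw [hξ]; exact hreal_le ξ.re
    · exact (hlt ξ hy).le
  · intro ξ hmem
    by_cases hy : ξ.im = 0
    · have hξ : ξ = ((ξ.re : ℝ) : ℂ) := Complex.ext (by simp) (by simp [hy])
      rw [hξ, theta_real18 a b hab ξ.re]
      have hnotin : ∀ j : Fin m, ¬(a j ≤ ξ.re ∧ ξ.re < b j) := by
        intro j hc
        exact hmem ⟨ξ.re, Set.mem_iUnion.2 ⟨j, hc.1, hc.2.le⟩, hξ.symm⟩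
      rw [Finset.sum_eq_zero (fun k _ => if_neg (hnotin k))]
      exact Real.pi_pos
    · exact hlt ξ hy
  · intro j x hx
    rw [theta_real18 a b hab x]
    have hj : a j ≤ x ∧ x < b j := ⟨hx.1, hx.2⟩
    rw [Finset.sum_eq_single j
      (fun k _ hk => if_neg (fun hc => hk (huniq x k j hc hj)))
      (fun h => absurd (Finset.mem_univ j) h)]
    rw [if_pos hj]
end
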